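/- Let U ⊆ ℝ be open, u : U → ℂ, l₁ ∈ ℂ, and let ψ : U → ℂ be twice differentiable with ψ(x) ≠ 0 for all x ∈ U and −ψ''(x) + u(x)ψ(x) = l₁ ψ(x) on U. Set w = ψ'/ψ, (Q f)(x) = f'(x) − w(x) f(x), (Q^* f)(x) = −f'(x) − w(x) f(x), and define the transformed potential u₁(x) = u(x) − 2 w'(x). Then for every twice differentiable g : U → ℂ and every x ∈ U, (Q(Q^* g))(x) = −g''(x) + u₁(x) g(x) − l₁ g(x). -/

import Mathlib

theorem stmt_11 (U : Set ℝ) (hU : IsOpen U) (u : ℝ → ℂ) (l₁ : ℂ) (ψ : ℝ → ℂ)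
    (hψ1 : ∀ x ∈ U, DifferentiableAt ℝ ψ x)
    (hψ2 : ∀ x ∈ U, DifferentiableAt ℝ (deriv ψ) x)
    (hψne : ∀ x ∈ U, ψ x ≠ 0)
    (hψeq : ∀ x ∈ U, -(deriv (deriv ψ) x) + u x * ψ x = l₁ * ψ x)
    (g : ℝ → ℂ)
    (hg1 : ∀ x ∈ U, DifferentiableAt ℝ g x)
    (hg2 : ∀ x ∈ U, DifferentiableAt ℝ (deriv g) x) :
    ∀ x ∈ U,
      deriv (fun y => -(deriv g y) - (deriv ψ y / ψ y) * g y) x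
          - (deriv ψ x / ψ x) * (-(deriv g x) - (deriv ψ x / ψ x) * g x)
        = -(deriv (deriv g) x)
          + (u x - 2 * deriv (fun y => deriv ψ y / ψ y) x) * g x - l₁ * g x := by
  intro x hx
  have hne := hψne x hx
  have hw : DifferentiableAt ℝ (fun y => deriv ψ y / ψ y) x :=
    (hψ2 x hx).div (hψ1 x hx) hne
  have hdw : deriv (fun y => deriv ψ y / ψ y) x =
      (deriv (deriv ψ) x * ψ x - deriv ψ x * deriv ψ x) / (ψ x) ^ 2 :=
    deriv_div (hψ2 x hx) (hψ1 x hx) hne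
  have h1 : deriv (fun y => -(deriv g y) - (deriv ψ y / ψ y) * g y) x =
      -(deriv (deriv g) x) -
        (deriv (fun y => deriv ψ y / ψ y) x * g x + (deriv ψ x / ψ x) * deriv g x) := by
    rw [deriv_fun_sub ((hg2 x hx).fun_neg) (hw.fun_mul (hg1 x hx)), deriv.fun_neg,
      deriv_fun_mul hw (hg1 x hx)]
  have hpsi2 : deriv (deriv ψ) x = (u x - l₁) * ψ x := by
    have := hψeq x hx; ring_nf at this ⊢; linear_combination -this
  rw [h1, hdw, hpsi2]
  field_simp
  ring
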